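/- Let r ≥ 1 and let a, α : Fin r → ℝ. For every multi-index n ∈ ℕ^r and all real numbers x, y, the addition formula holds: C_n^{(a)}(x+y) = Σ_{k₁=0}^{n₁} ⋯ Σ_{k_r=0}^{n_r} (∏_{i=1}^{r} C(n_i,k_i)) C_k^{(α)}(x) · C_{n-k}^{(a-α)}(y), where n-k and a-α denote componentwise differences. -/

import Mathlib

/-- The falling factorial `x⁽ⁿ⁾ = x(x-1)⋯(x-n+1)`. -/
noncomputable def fallingFactorial (x : ℝ) (n : ℕ) : ℝ :=
  ∏ j ∈ Finset.range n, (x - j)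

/-- The multiple Charlier polynomial `C_n^{(a)}(x)` for a multi-index `n : Fin r → ℕ`
and parameters `a : Fin r → ℝ`. -/
noncomputable def mcharlier {r : ℕ} (a : Fin r → ℝ) (n : Fin r → ℕ) (x : ℝ) : ℝ :=
  ∑ k ∈ Fintype.piFinset (fun i => Finset.range (n i + 1)),
    (∏ i, ((n i).choose (k i) : ℝ) * (-a i) ^ (n i - k i)) * fallingFactorial x (∑ i, k i)

open Finset Fintype

lemma ff_succ (x : ℝ) (n : ℕ) :
    fallingFactorial x (n + 1) = fallingFactorial x n * (x - n) := by
  simp [fallingFactorial, Finset.prod_range_succ]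

lemma ff_add (x : ℝ) (m n : ℕ) :
    fallingFactorial x (m + n) = fallingFactorial x m * fallingFactorial (x - m) n := by
  unfold fallingFactorial
  rw [Finset.prod_range_add]
  congr 1
  refine Finset.prod_congr rfl fun j _ => ?_
  push_cast; ring

lemma ffVan (m : ℕ) (x y : ℝ) :
    fallingFactorial (x + y) m =
      ∑ j ∈ range (m + 1),
        (m.choose j : ℝ) * fallingFactorial x j * fallingFactorial y (m - j) := by
  induction m with
  | zero => simp [fallingFactorial]
  | succ m ih =>
    rw [ff_succ, ih, Finset.sum_mul]
    have key : ∀ j ∈ range (m + 1),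
        (m.choose j : ℝ) * fallingFactorial x j * fallingFactorial y (m - j) * (x + y - m)
          = (m.choose j : ℝ) * (fallingFactorial x (j+1) * fallingFactorial y (m - j))
            + (m.choose j : ℝ) * (fallingFactorial x j * fallingFactorial y (m + 1 - j)) := by
      intro j hj
      rw [mem_range] at hj
      have hjm : j ≤ m := Nat.lt_succ_iff.mp hj
      have hsplit : x + y - (m : ℝ) = (x - j) + (y - ((m - j : ℕ) : ℝ)) := by
        rw [Nat.cast_sub hjm]; ring
      have h2 : m + 1 - j = (m - j) + 1 := by omega
      rw [ff_succ, h2, ff_succ, hsplit]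
      ring
    rw [Finset.sum_congr rfl key, Finset.sum_add_distrib]
    rw [Finset.sum_range_succ' (n := m + 1)
      (f := fun j => ((m+1).choose j : ℝ) * fallingFactorial x j * fallingFactorial y (m + 1 - j))]
    have e1 : ∀ j ∈ range (m + 1),
        (((m+1).choose (j+1) : ℝ)) * fallingFactorial x (j+1) * fallingFactorial y (m + 1 - (j+1))
        = (m.choose j : ℝ) * (fallingFactorial x (j+1) * fallingFactorial y (m - j))
          + (m.choose (j+1) : ℝ) * (fallingFactorial x (j+1) * fallingFactorial y (m - j)) := by
      intro j hj
      have : (m+1).choose (j+1) = m.choose j + m.choose (j+1) := Nat.choose_succ_succ m j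
      have h3 : m + 1 - (j + 1) = m - j := by omega
      rw [this, h3]; push_cast; ring
    rw [Finset.sum_congr rfl e1, Finset.sum_add_distrib]
    have e2 : ∑ j ∈ range (m + 1), (m.choose (j+1) : ℝ) * (fallingFactorial x (j+1) * fallingFactorial y (m - j))
        + (((m+1).choose 0 : ℝ) * fallingFactorial x 0 * fallingFactorial y (m + 1 - 0))
        = ∑ j ∈ range (m + 1), (m.choose j : ℝ) * (fallingFactorial x j * fallingFactorial y (m + 1 - j)) := by
      rw [Finset.sum_range_succ' (n := m)
        (f := fun j => (m.choose j : ℝ) * (fallingFactorial x j * fallingFactorial y (m + 1 - j))),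
        Finset.sum_range_succ (n := m)
        (f := fun j => (m.choose (j+1) : ℝ) * (fallingFactorial x (j+1) * fallingFactorial y (m - j)))]
      rw [Nat.choose_succ_self]
      push_cast
      rw [zero_mul, add_zero]
      simp [fallingFactorial]
    rw [add_assoc, e2]

lemma sum_piFinset_cons {r : ℕ} (s : Fin (r+1) → Finset ℕ) (f : (Fin (r+1) → ℕ) → ℝ) :
    ∑ g ∈ Fintype.piFinset s, f g =
      ∑ x ∈ s 0, ∑ g ∈ Fintype.piFinset (fun i => s i.succ), f (Fin.cons x g) := by
  rw [← Finset.sum_product']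
  refine Finset.sum_nbij' (i := fun g => (g 0, Fin.tail g)) (j := fun p => Fin.cons p.1 p.2)
    ?_ ?_ ?_ ?_ ?_
  · intro g hg
    rw [Fin.mem_piFinset_iff_zero_tail] at hg
    simpa [Finset.mem_product, Fin.tail] using hg
  · intro p hp
    rw [Finset.mem_product] at hp
    rw [Fin.mem_piFinset_iff_zero_tail]
    simpa [Fin.tail] using hp
  · intro g _; exact Fin.cons_self_tail g
  · intro p _; simp
  · intro g _; rw [Fin.cons_self_tail]

lemma ffVanVec {r : ℕ} (k : Fin r → ℕ) (x y : ℝ) :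
    fallingFactorial (x + y) (∑ i, k i) =
      ∑ s ∈ Fintype.piFinset (fun i => range (k i + 1)),
        (∏ i, ((k i).choose (s i) : ℝ)) * fallingFactorial x (∑ i, s i) *
          fallingFactorial y (∑ i, (k i - s i)) := by
  induction r generalizing x y with
  | zero => simp [fallingFactorial]
  | succ r ih =>
    rw [sum_piFinset_cons (s := fun i => range (k i + 1))]
    rw [Fin.sum_univ_succ, ff_add, ffVan, Finset.sum_mul]
    refine Finset.sum_congr rfl fun s0 hs0 => ?_
    rw [mem_range, Nat.lt_succ_iff] at hs0
    have hxy : x + y - (k 0 : ℝ) = (x - s0) + (y - ((k 0 - s0 : ℕ) : ℝ)) := by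
      rw [Nat.cast_sub hs0]; ring
    rw [hxy, ih (fun i => k i.succ), Finset.mul_sum]
    refine Finset.sum_congr rfl fun g _ => ?_
    simp only [Fin.prod_univ_succ, Fin.sum_univ_succ, Fin.cons_zero, Fin.cons_succ]
    rw [ff_add x s0, ff_add y (k 0 - s0)]
    ring

lemma binom_sum (N : ℕ) (A B : ℝ) :
    ∑ j ∈ range (N + 1), (N.choose j : ℝ) * A ^ j * B ^ (N - j) = (A + B) ^ N := by
  rw [add_pow]
  exact Finset.sum_congr rfl fun j _ => by ring

lemma core (n s t : ℕ) (A B : ℝ) :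
    ∑ k ∈ range (n + 1), (n.choose k : ℝ) * ((k.choose s : ℝ) * A ^ (k - s)) *
        (((n - k).choose t : ℝ) * B ^ (n - k - t))
      = (n.choose (s + t) : ℝ) * ((s + t).choose s : ℝ) * (A + B) ^ (n - s - t) := by
  by_cases h : s + t ≤ n
  · set N := n - s - t with hN
    set F : ℕ → ℝ := fun k => (n.choose k : ℝ) * ((k.choose s : ℝ) * A ^ (k - s)) *
        (((n - k).choose t : ℝ) * B ^ (n - k - t)) with hF
    have step1 : ∑ k ∈ range (n + 1), F k = ∑ j ∈ range (N + 1), F (s + j) := by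
      rw [← Finset.sum_image (f := F) (g := fun j => s + j) (s := range (N + 1))
        (by intro a _ b _ hab; exact Nat.add_left_cancel hab)]
      symm
      apply Finset.sum_subset
      · intro k hk
        simp only [Finset.mem_image, mem_range] at hk ⊢
        obtain ⟨j, hj, rfl⟩ := hk; omega
      · intro k hk hk2
        simp only [Finset.mem_image, mem_range] at hk hk2
        by_cases hks : s ≤ k
        · have hlt : n - k < t := by
            rcases Nat.lt_or_ge (k - s) (N + 1) with hc | hc
            · exact absurd ⟨k - s, hc, by omega⟩ hk2
            · omega
          simp [hF, Nat.choose_eq_zero_of_lt hlt]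
        · simp [hF, Nat.choose_eq_zero_of_lt (show k < s by omega)]
    have step2 : ∀ j ∈ range (N + 1),
        F (s + j) = (n.choose (s + t) : ℝ) * ((s + t).choose s : ℝ) *
          ((N.choose j : ℝ) * A ^ j * B ^ (N - j)) := by
      intro j hj
      rw [mem_range, Nat.lt_succ_iff] at hj
      have e1 : s + j - s = j := by omega
      have e2 : n - (s + j) - t = N - j := by omega
      have hc : n.choose (s + j) * (s + j).choose s * ((n - (s + j)).choose t)
          = n.choose (s + t) * (s + t).choose s * N.choose j := by
        have h1 : n.choose (s + j) * (s + j).choose s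
            = n.choose s * (n - s).choose j := by
          have := Nat.choose_mul (n := n) (show s ≤ s + j by omega)
          simpa using this
        have h2 : n.choose (s + t) * (s + t).choose s
            = n.choose s * (n - s).choose t := by
          have := Nat.choose_mul (n := n) (show s ≤ s + t by omega)
          simpa using this
        have h3 : (n - s).choose (j + t) * (j + t).choose j
            = (n - s).choose j * (n - s - j).choose t := by
          have := Nat.choose_mul (n := n - s) (show j ≤ j + t by omega)
          simpa using this
        have h4 : (n - s).choose (j + t) * (j + t).choose t
            = (n - s).choose t * (n - s - t).choose j := by
          have := Nat.choose_mul (n := n - s) (show t ≤ j + t by omega)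
          simpa using this
        have h5 : (j + t).choose j = (j + t).choose t := by
          rw [← Nat.choose_symm (show j ≤ j + t by omega)]
          congr 1; omega
        have h6 : n - (s + j) = n - s - j := by omega
        rw [h6, h1, h2, hN, mul_assoc, ← h3, h5, h4, ← mul_assoc]
      calc F (s + j) = ((n.choose (s + j) * (s + j).choose s * ((n - (s + j)).choose t) : ℕ) : ℝ)
            * A ^ (s + j - s) * B ^ (n - (s + j) - t) := by
              rw [hF]; push_cast; ring
        _ = _ := by rw [hc, e1, e2]; push_cast; ring
    rw [step1, Finset.sum_congr rfl step2, ← Finset.mul_sum, binom_sum]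
  · rw [Nat.choose_eq_zero_of_lt (show n < s + t by omega)]
    push_cast
    rw [zero_mul, zero_mul]
    apply Finset.sum_eq_zero
    intro k hk
    rw [mem_range] at hk
    by_cases hks : s ≤ k
    · simp [Nat.choose_eq_zero_of_lt (show n - k < t by omega)]
    · simp [Nat.choose_eq_zero_of_lt (show k < s by omega)]

lemma extend_box {r : ℕ} {n k : Fin r → ℕ} (hk : ∀ i, k i ≤ n i) (H : (Fin r → ℕ) → ℝ)
    (h0 : ∀ s, (∃ i, k i < s i) → H s = 0) :
    ∑ s ∈ Fintype.piFinset (fun i => range (k i + 1)), H s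
      = ∑ s ∈ Fintype.piFinset (fun i => range (n i + 1)), H s := by
  apply Finset.sum_subset
  · intro s hs
    rw [Fintype.mem_piFinset] at hs ⊢
    intro i
    have := hs i
    rw [mem_range] at this ⊢
    have := hk i
    omega
  · intro s _ hs2
    rw [Fintype.mem_piFinset] at hs2
    push_neg at hs2
    obtain ⟨i, hi⟩ := hs2
    rw [mem_range] at hi
    exact h0 s ⟨i, by omega⟩

lemma reindex_box {r : ℕ} {n s : Fin r → ℕ} (G : (Fin r → ℕ) → ℝ)
    (hG1 : ∀ m : Fin r → ℕ, (∃ i, m i < s i) → G m = 0)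
    (hG2 : ∀ t : Fin r → ℕ, (∃ i, n i < s i + t i) → G (fun i => s i + t i) = 0) :
    ∑ m ∈ Fintype.piFinset (fun i => range (n i + 1)), G m
      = ∑ t ∈ Fintype.piFinset (fun i => range (n i + 1)), G (fun i => s i + t i) := by
  classical
  have hf1 : ∑ m ∈ Fintype.piFinset (fun i => range (n i + 1)), G m
      = ∑ m ∈ (Fintype.piFinset (fun i => range (n i + 1))).filter
          (fun m => ∀ i, s i ≤ m i), G m := by
    symm
    apply Finset.sum_filter_of_ne
    intro m _ hm
    show ∀ i, s i ≤ m i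
    intro i
    by_contra hi
    exact hm (hG1 m ⟨i, by omega⟩)
  have hf2 : ∑ t ∈ Fintype.piFinset (fun i => range (n i + 1)), G (fun i => s i + t i)
      = ∑ t ∈ (Fintype.piFinset (fun i => range (n i + 1))).filter
          (fun t => ∀ i, s i + t i ≤ n i), G (fun i => s i + t i) := by
    symm
    apply Finset.sum_filter_of_ne
    intro t _ ht
    show ∀ i, s i + t i ≤ n i
    intro i
    by_contra hi
    exact ht (hG2 t ⟨i, by omega⟩)
  rw [hf1, hf2]
  refine Finset.sum_nbij' (i := fun m => fun i => m i - s i)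
    (j := fun t => fun i => s i + t i) ?_ ?_ ?_ ?_ ?_
  · intro m hm
    simp only [Finset.mem_filter, Fintype.mem_piFinset, Finset.mem_range] at hm ⊢
    refine ⟨fun i => ?_, fun i => ?_⟩
    · have := hm.1 i; omega
    · have h1 := hm.1 i; have h2 := hm.2 i; omega
  · intro t ht
    simp only [Finset.mem_filter, Fintype.mem_piFinset, Finset.mem_range] at ht ⊢
    refine ⟨fun i => ?_, fun i => ?_⟩
    · have := ht.2 i; omega
    · have := ht.2 i; omega
  · intro m hm
    simp only [Finset.mem_filter, Fintype.mem_piFinset, Finset.mem_range] at hm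
    funext i
    have := hm.2 i
    show s i + (m i - s i) = m i
    omega
  · intro t _
    funext i
    show s i + t i - s i = t i
    omega
  · intro m hm
    simp only [Finset.mem_filter, Fintype.mem_piFinset, Finset.mem_range] at hm
    congr 1
    funext i
    have := hm.2 i
    show m i = s i + (m i - s i)
    omega

/-- Addition formula for the multiple Charlier polynomials. -/
theorem mcharlier_addition (r : ℕ) (hr : 1 ≤ r) (a α : Fin r → ℝ) (n : Fin r → ℕ) (x y : ℝ) :
    mcharlier a n (x + y) =
      ∑ k ∈ Fintype.piFinset (fun i => Finset.range (n i + 1)),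
        (∏ i, ((n i).choose (k i) : ℝ)) *
          mcharlier α k x * mcharlier (a - α) (fun i => n i - k i) y := by
  classical
  have hL : mcharlier a n (x + y)
      = ∑ s ∈ Fintype.piFinset (fun i => range (n i + 1)),
          ∑ t ∈ Fintype.piFinset (fun i => range (n i + 1)),
          (∏ i, ((n i).choose (s i + t i) : ℝ) * (((s i + t i).choose (s i)) : ℝ) *
            (-a i) ^ (n i - s i - t i)) * fallingFactorial x (∑ i, s i) *
            fallingFactorial y (∑ i, t i) := by
    unfold mcharlier
    have h1 : ∀ m ∈ Fintype.piFinset (fun i => range (n i + 1)),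
        (∏ i, ((n i).choose (m i) : ℝ) * (-a i) ^ (n i - m i)) *
            fallingFactorial (x + y) (∑ i, m i)
        = ∑ s ∈ Fintype.piFinset (fun i => range (n i + 1)),
            (∏ i, ((n i).choose (m i) : ℝ) * (-a i) ^ (n i - m i)) *
            ((∏ i, ((m i).choose (s i) : ℝ)) * fallingFactorial x (∑ i, s i) *
              fallingFactorial y (∑ i, (m i - s i))) := by
      intro m hm
      rw [Fintype.mem_piFinset] at hm
      rw [ffVanVec, Finset.mul_sum]
      refine extend_box (fun i => by have := hm i; rw [mem_range] at this; omega) _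
        (fun s hs => ?_)
      obtain ⟨i, hi⟩ := hs
      have hz : ((m i).choose (s i) : ℝ) = 0 := by
        rw [Nat.choose_eq_zero_of_lt hi]; norm_num
      have hz2 : (∏ i, ((m i).choose (s i) : ℝ)) = 0 :=
        Finset.prod_eq_zero (Finset.mem_univ i) hz
      rw [hz2]
      ring
    rw [Finset.sum_congr rfl h1, Finset.sum_comm]
    refine Finset.sum_congr rfl fun s hs => ?_
    rw [Fintype.mem_piFinset] at hs
    rw [reindex_box
      (G := fun m => (∏ i, ((n i).choose (m i) : ℝ) * (-a i) ^ (n i - m i)) *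
            ((∏ i, ((m i).choose (s i) : ℝ)) * fallingFactorial x (∑ i, s i) *
              fallingFactorial y (∑ i, (m i - s i))))
      (n := n) (s := s)
      (fun m hm => by
        beta_reduce
        obtain ⟨i, hi⟩ := hm
        have hz : ((m i).choose (s i) : ℝ) = 0 := by
          rw [Nat.choose_eq_zero_of_lt hi]; norm_num
        have hz2 : (∏ i, ((m i).choose (s i) : ℝ)) = 0 :=
          Finset.prod_eq_zero (Finset.mem_univ i) hz
        rw [hz2]
        ring)
      (fun t ht => by
        beta_reduce
        obtain ⟨i, hi⟩ := ht
        have hz : ((n i).choose (s i + t i) : ℝ) = 0 := by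
          rw [Nat.choose_eq_zero_of_lt hi]; norm_num
        have hz2 : (∏ i, ((n i).choose (s i + t i) : ℝ) * (-a i) ^ (n i - (s i + t i))) = 0 :=
          Finset.prod_eq_zero (Finset.mem_univ i) (by rw [hz]; ring)
        rw [hz2]
        ring)]
    beta_reduce
    refine Finset.sum_congr rfl fun t ht => ?_
    have e2 : (∑ i, (s i + t i - s i)) = ∑ i, t i :=
      Finset.sum_congr rfl (fun i _ => by omega)
    have hp : (∏ i, ((n i).choose (s i + t i) : ℝ) * (-a i) ^ (n i - (s i + t i))) *
        (∏ i, ((s i + t i).choose (s i) : ℝ))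
        = ∏ i, ((n i).choose (s i + t i) : ℝ) * (((s i + t i).choose (s i)) : ℝ) *
            (-a i) ^ (n i - s i - t i) := by
      rw [← Finset.prod_mul_distrib]
      refine Finset.prod_congr rfl fun i _ => ?_
      have h6 : n i - (s i + t i) = n i - s i - t i := by omega
      rw [h6]; ring
    rw [e2, ← hp]
    ring
  rw [hL]
  unfold mcharlier
  symm
  simp only [Pi.sub_apply]
  have h1 : ∀ k ∈ Fintype.piFinset (fun i => range (n i + 1)),
      (∏ i, ((n i).choose (k i) : ℝ)) *
        (∑ s ∈ Fintype.piFinset (fun i => range (k i + 1)),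
          (∏ i, ((k i).choose (s i) : ℝ) * (-α i) ^ (k i - s i)) *
            fallingFactorial x (∑ i, s i)) *
        (∑ t ∈ Fintype.piFinset (fun i => range (n i - k i + 1)),
          (∏ i, ((n i - k i).choose (t i) : ℝ) * (-(a i - α i)) ^ (n i - k i - t i)) *
            fallingFactorial y (∑ i, t i))
      = ∑ s ∈ Fintype.piFinset (fun i => range (n i + 1)),
          ∑ t ∈ Fintype.piFinset (fun i => range (n i + 1)),
          (∏ i, ((n i).choose (k i) : ℝ)) *
            (((∏ i, ((k i).choose (s i) : ℝ) * (-α i) ^ (k i - s i)) *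
              fallingFactorial x (∑ i, s i)) *
            ((∏ i, ((n i - k i).choose (t i) : ℝ) * (-(a i - α i)) ^ (n i - k i - t i)) *
              fallingFactorial y (∑ i, t i))) := by
    intro k hk
    rw [Fintype.mem_piFinset] at hk
    have hs1 : (∑ s ∈ Fintype.piFinset (fun i => range (k i + 1)),
          (∏ i, ((k i).choose (s i) : ℝ) * (-α i) ^ (k i - s i)) *
            fallingFactorial x (∑ i, s i))
        = ∑ s ∈ Fintype.piFinset (fun i => range (n i + 1)),
          (∏ i, ((k i).choose (s i) : ℝ) * (-α i) ^ (k i - s i)) *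
            fallingFactorial x (∑ i, s i) := by
      refine extend_box (fun i => by have := hk i; rw [mem_range] at this; omega) _
        (fun s hs => ?_)
      obtain ⟨i, hi⟩ := hs
      have hz : ((k i).choose (s i) : ℝ) = 0 := by
        rw [Nat.choose_eq_zero_of_lt hi]; norm_num
      rw [Finset.prod_eq_zero (Finset.mem_univ i) (by rw [hz]; ring)]
      ring
    have hs2 : (∑ t ∈ Fintype.piFinset (fun i => range (n i - k i + 1)),
          (∏ i, ((n i - k i).choose (t i) : ℝ) * (-(a i - α i)) ^ (n i - k i - t i)) *
            fallingFactorial y (∑ i, t i))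
        = ∑ t ∈ Fintype.piFinset (fun i => range (n i + 1)),
          (∏ i, ((n i - k i).choose (t i) : ℝ) * (-(a i - α i)) ^ (n i - k i - t i)) *
            fallingFactorial y (∑ i, t i) := by
      refine extend_box (fun i => Nat.sub_le _ _) _ (fun t ht => ?_)
      obtain ⟨i, hi⟩ := ht
      have hz : ((n i - k i).choose (t i) : ℝ) = 0 := by
        rw [Nat.choose_eq_zero_of_lt hi]; norm_num
      rw [Finset.prod_eq_zero (Finset.mem_univ i) (by rw [hz]; ring)]
      ring
    rw [hs1, hs2, mul_assoc, Finset.sum_mul_sum, Finset.mul_sum]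
    exact Finset.sum_congr rfl fun s _ => Finset.mul_sum _ _ _
  rw [Finset.sum_congr rfl h1, Finset.sum_comm]
  refine Finset.sum_congr rfl fun s hs => ?_
  rw [Finset.sum_comm]
  refine Finset.sum_congr rfl fun t ht => ?_
  have hterm : ∀ k ∈ Fintype.piFinset (fun i => range (n i + 1)),
      (∏ i, ((n i).choose (k i) : ℝ)) *
        (((∏ i, ((k i).choose (s i) : ℝ) * (-α i) ^ (k i - s i)) *
          fallingFactorial x (∑ i, s i)) *
        ((∏ i, ((n i - k i).choose (t i) : ℝ) * (-(a i - α i)) ^ (n i - k i - t i)) *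
          fallingFactorial y (∑ i, t i)))
      = (∏ i, ((n i).choose (k i) : ℝ) * (((k i).choose (s i) : ℝ) * (-α i) ^ (k i - s i)) *
          (((n i - k i).choose (t i) : ℝ) * (-(a i - α i)) ^ (n i - k i - t i))) *
        (fallingFactorial x (∑ i, s i) * fallingFactorial y (∑ i, t i)) := by
    intro k _
    have hsplit : (∏ i, ((n i).choose (k i) : ℝ) *
          (((k i).choose (s i) : ℝ) * (-α i) ^ (k i - s i)) *
          (((n i - k i).choose (t i) : ℝ) * (-(a i - α i)) ^ (n i - k i - t i)))
        = (∏ i, ((n i).choose (k i) : ℝ)) *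
          (∏ i, ((k i).choose (s i) : ℝ) * (-α i) ^ (k i - s i)) *
          (∏ i, ((n i - k i).choose (t i) : ℝ) * (-(a i - α i)) ^ (n i - k i - t i)) := by
      rw [Finset.prod_mul_distrib, Finset.prod_mul_distrib]
    rw [hsplit]
    ring
  rw [Finset.sum_congr rfl hterm, ← Finset.sum_mul,
    ← Finset.prod_univ_sum (t := fun i => range (n i + 1))
      (f := fun i ki => ((n i).choose ki : ℝ) * ((ki.choose (s i) : ℝ) * (-α i) ^ (ki - s i)) *
        (((n i - ki).choose (t i) : ℝ) * (-(a i - α i)) ^ (n i - ki - t i)))]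
  have hcore : ∀ i : Fin r, (∑ ki ∈ range (n i + 1),
        ((n i).choose ki : ℝ) * ((ki.choose (s i) : ℝ) * (-α i) ^ (ki - s i)) *
          (((n i - ki).choose (t i) : ℝ) * (-(a i - α i)) ^ (n i - ki - t i)))
      = ((n i).choose (s i + t i) : ℝ) * (((s i + t i).choose (s i)) : ℝ) *
          (-a i) ^ (n i - s i - t i) := by
    intro i
    have h := core (n i) (s i) (t i) (-α i) (-(a i - α i))
    have hAB : (-α i) + (-(a i - α i)) = -(a i) := by ring
    rw [hAB] at h
    exact h
  rw [Finset.prod_congr rfl (fun i _ => hcore i)]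
  ring
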